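/- If k = 2^λ is a power of 2 with λ ≥ 2, then Γ(k) ≤ (3/2)·k, where Γ(k) is the largest odd positive integer m such that the length-km prefix of the Thue-Morse word is not a k-anti-power. -/

import Mathlib

open Filter

/-- The Thue-Morse word, indexed from 1: `tm i` is the parity of the number of
1's in the binary expansion of `i - 1`. -/
def tm (i : ℕ) : ℕ := (Nat.digits 2 (i - 1)).sum % 2

/-- The factor `t_a t_{a+1} ⋯ t_b` of the Thue-Morse word. -/
def seg (a b : ℕ) : List ℕ := (List.range (b + 1 - a)).map (fun j => tm (a + j))

/-- The `i`-th block of length `m` of the Thue-Morse word (blocks indexed from 0):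
`t_{im+1} ⋯ t_{(i+1)m}`. -/
def block (m i : ℕ) : List ℕ := seg (i * m + 1) ((i + 1) * m)

/-- The prefix of the Thue-Morse word of length `k * m` is a `k`-anti-power:
its `k` consecutive blocks of length `m` are pairwise distinct. -/
def IsAntiPowerPrefix (m k : ℕ) : Prop :=
  ∀ i j, i < k → j < k → i ≠ j → block m i ≠ block m j

/-- `w` is a factor (contiguous substring) of the Thue-Morse word. -/
def IsFactor (w : List ℕ) : Prop :=
  ∃ a : ℕ, w = (List.range w.length).map (fun j => tm (a + 1 + j))

/-- `δ(m) = ⌈log₂ (m/3)⌉` (a nonnegative integer for `m ≥ 2`). -/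
noncomputable def delta (m : ℕ) : ℕ := (⌈Real.logb 2 ((m : ℝ) / 3)⌉).toNat

/-- `⌈log₂ m⌉`. -/
noncomputable def ell (m : ℕ) : ℕ := (⌈Real.logb 2 (m : ℝ)⌉).toNat

/-- `K(m)`: the smallest `k` such that the prefix of the Thue-Morse word of
length `k * m` is not a `k`-anti-power. -/
noncomputable def Kap (m : ℕ) : ℕ := sInf {k | ¬ IsAntiPowerPrefix m k}

/-- `γ(k)`: the smallest odd positive integer `m` such that the prefix of the
Thue-Morse word of length `k * m` is a `k`-anti-power. -/
noncomputable def gam (k : ℕ) : ℕ := sInf {m | Odd m ∧ IsAntiPowerPrefix m k}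

/-- `Γ(k)`: the largest odd positive integer `m` such that the prefix of the
Thue-Morse word of length `k * m` is not a `k`-anti-power. -/
noncomputable def Gam (k : ℕ) : ℕ := sSup {m | Odd m ∧ ¬ IsAntiPowerPrefix m k}

/-- The Thue-Morse morphism `μ` (0 ↦ 01, 1 ↦ 10) on words. -/
def mu (w : List ℕ) : List ℕ := w.flatMap (fun a => if a = 0 then [0, 1] else [1, 0])


def tt (n : ℕ) : ℕ := (Nat.digits 2 n).sum % 2

lemma tt_lt (n : ℕ) : tt n < 2 := Nat.mod_lt _ (by norm_num)

lemma tt_even (a : ℕ) : tt (2 * a) = tt a := by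
  rcases Nat.eq_zero_or_pos a with h | h
  · simp [h]
  · unfold tt
    rw [Nat.digits_def' (by norm_num : 1 < 2) (by omega)]
    rw [show 2 * a % 2 = 0 by omega, show 2 * a / 2 = a by omega]
    simp

lemma tt_odd (a : ℕ) : tt (2 * a + 1) = 1 - tt a := by
  unfold tt
  rw [Nat.digits_def' (by norm_num : 1 < 2) (by omega)]
  rw [show (2 * a + 1) % 2 = 1 by omega, show (2 * a + 1) / 2 = a by omega]
  have := Nat.mod_lt ((Nat.digits 2 a).sum) (show 0 < 2 by norm_num)
  simp only [List.sum_cons]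
  omega

lemma no_three (c : ℕ) (h1 : tt c = tt (c+1)) (h2 : tt (c+1) = tt (c+2)) : False := by
  rcases Nat.even_or_odd c with ⟨a, ha⟩ | ⟨a, ha⟩
  · rw [show c = 2*a by omega, tt_even, tt_odd] at h1
    have := tt_lt a; omega
  · rw [show c + 1 = 2*(a+1) by omega] at h2
    rw [show c + 2 = 2*(a+1) + 1 by omega] at h2
    rw [tt_even, tt_odd] at h2
    have := tt_lt (a+1); omega

lemma runB (h e N : ℕ) (he : e = 2*h+1) (H : ∀ r < 4, tt (N + r) = tt (N + r + e)) : False := by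
  have H0 := H 0 (by norm_num)
  have H1 := H 1 (by norm_num)
  have H2 := H 2 (by norm_num)
  have H3 := H 3 (by norm_num)
  rcases Nat.even_or_odd N with ⟨c, hc⟩ | ⟨c, hc⟩
  · rw [show N + 0 + e = 2*(c+h) + 1 by omega, show N + 0 = 2*c by omega,
      tt_even, tt_odd] at H0
    rw [show N + 1 + e = 2*(c+h+1) by omega, show N + 1 = 2*c + 1 by omega,
      tt_odd, tt_even] at H1
    rw [show N + 2 + e = 2*(c+h+1) + 1 by omega, show N + 2 = 2*(c+1) by omega,
      tt_even, tt_odd] at H2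
    rw [show N + 3 + e = 2*(c+h+2) by omega, show N + 3 = 2*(c+1) + 1 by omega,
      tt_odd, tt_even] at H3
    have l1 := tt_lt c; have l2 := tt_lt (c+1)
    have l3 := tt_lt (c+h); have l4 := tt_lt (c+h+1); have l5 := tt_lt (c+h+2)
    exact no_three (c+h) (by omega) (by omega)
  · rw [show N + 0 + e = 2*(c+h+1) by omega, show N + 0 = 2*c + 1 by omega,
      tt_odd, tt_even] at H0
    rw [show N + 1 + e = 2*(c+h+1) + 1 by omega, show N + 1 = 2*(c+1) by omega,
      tt_even, tt_odd] at H1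
    rw [show N + 2 + e = 2*(c+h+2) by omega, show N + 2 = 2*(c+1) + 1 by omega,
      tt_odd, tt_even] at H2
    rw [show N + 3 + e = 2*(c+h+2) + 1 by omega, show N + 3 = 2*(c+2) by omega,
      tt_even, tt_odd] at H3
    have l1 := tt_lt c; have l2 := tt_lt (c+1); have l2' := tt_lt (c+2)
    have l4 := tt_lt (c+h+1); have l5 := tt_lt (c+h+2)
    exact no_three c (by omega) (by omega)

lemma runM : ∀ s e N, Odd e → (∀ r < 3 * 2^s + 1, tt (N + r) = tt (N + r + 2^s * e)) → False := by
  intro s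
  induction s with
  | zero =>
    intro e N he H
    obtain ⟨h, hh⟩ := he
    refine runB h e N (by omega) (fun r hr => ?_)
    have := H r (by norm_num; omega)
    simpa using this
  | succ s ih =>
    intro e N he H
    refine ih e (N / 2) he (fun r hr => ?_)
    set a := N / 2 + r with ha
    have hE : 2^(s+1) * e = 2 * (2^s * e) := by rw [pow_succ]; ring
    have hP : (0:ℕ) < 2^s := Nat.pow_pos (by norm_num)
    by_cases h2 : N ≤ 2 * a
    · have hlt : 2 * a - N < 3 * 2^(s+1) + 1 := by
        have : 2^(s+1) = 2 * 2^s := by rw [pow_succ]; ring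
        omega
      have := H (2 * a - N) hlt
      rw [show N + (2*a - N) + 2^(s+1)*e = 2*(a + 2^s*e) by omega] at this
      rw [show N + (2*a - N) = 2*a by omega] at this
      rw [tt_even, tt_even] at this
      exact this
    · have hNa : N = 2 * a + 1 := by omega
      have := H 0 (by positivity)
      rw [show N + 0 + 2^(s+1)*e = 2*(a + 2^s*e) + 1 by omega] at this
      rw [show N + 0 = 2*a + 1 by omega] at this
      rw [tt_odd, tt_odd] at this
      have := tt_lt a; have := tt_lt (a + 2^s*e)
      omega

lemma blocks_differ (lam m i j : ℕ) (hm : Odd m) (hmb : 3 * 2^(lam-1) < m)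
    (hij : i < j) (hj : j < 2^lam) :
    ∃ r, r < m ∧ tt (i*m + r) ≠ tt (j*m + r) := by
  by_contra hc
  push_neg at hc
  obtain ⟨s, e, hed, hje⟩ :=
    Nat.exists_eq_pow_mul_and_not_dvd (n := j - i) (by omega) 2 (by norm_num)
  have he : Odd e := Nat.odd_iff.mpr (by omega)
  have hepos : 0 < e := by
    rcases Nat.eq_zero_or_pos e with h | h
    · exfalso; omega
    · exact h
  have hs : s < lam := by
    by_contra h
    have h1 : (2:ℕ)^lam ≤ 2^s := Nat.pow_le_pow_right (by norm_num) (by omega)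
    have h2 : 2^s ≤ j - i := by
      calc 2^s ≤ 2^s * e := Nat.le_mul_of_pos_right _ hepos
      _ = j - i := hje.symm
    omega
  apply runM s (e * m) (i * m) (he.mul hm)
  intro r hr
  have hps : (2:ℕ)^s ≤ 2^(lam-1) := Nat.pow_le_pow_right (by norm_num) (by omega)
  have h1 : r < m := by omega
  have := hc r h1
  have h2 : 2^s * (e*m) = (j-i) * m := by rw [← mul_assoc, ← hje]
  have h3 : i*m ≤ j*m := Nat.mul_le_mul_right _ (le_of_lt hij)
  have h4 : (j-i)*m = j*m - i*m := Nat.sub_mul j i m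
  rw [h2, h4, show i*m + r + (j*m - i*m) = j*m + r by omega]
  exact this

lemma block_eq (m i : ℕ) : block m i = (List.range m).map (fun r => tt (i*m + r)) := by
  unfold block seg
  rw [show (i+1)*m + 1 - (i*m + 1) = m by ring_nf; omega]
  refine List.map_congr_left (fun r hr => ?_)
  show tm (i*m + 1 + r) = tt (i*m + r)
  unfold tm tt
  rw [show i*m + 1 + r - 1 = i*m + r by omega]

lemma ap_of_big (lam m : ℕ) (hm : Odd m) (hmb : 3*2^(lam-1) < m) :
    IsAntiPowerPrefix m (2^lam) := by
  have key : ∀ i j, i < j → j < 2^lam → block m i ≠ block m j := by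
    intro i j hij hj heq
    obtain ⟨r, hr, hne⟩ := blocks_differ lam m i j hm hmb hij hj
    apply hne
    have h1 : ((List.range m).map (fun r => tt (i*m + r)))[r]? =
        ((List.range m).map (fun r => tt (j*m + r)))[r]? := by
      rw [← block_eq, ← block_eq, heq]
    rw [List.getElem?_map, List.getElem?_map, List.getElem?_range hr] at h1
    simpa using h1
  intro i j hi hj hne
  rcases Nat.lt_or_ge i j with h | h
  · exact key i j h hj
  · have h' : j < i := by omega
    exact fun heq => key j i h' hi heq.symm

theorem stmt14 (lam : ℕ) (hlam : 2 ≤ lam) :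
    (Gam (2 ^ lam) : ℝ) ≤ (3 / 2) * 2 ^ lam := by

  have hb : Gam (2^lam) ≤ 3 * 2^(lam-1) := by
    apply csSup_le'
    intro m hm
    obtain ⟨hodd, hnap⟩ := hm
    by_contra h
    push_neg at h
    exact hnap (ap_of_big lam m hodd (by omega))
  calc (Gam (2^lam) : ℝ) ≤ ((3 * 2^(lam-1) : ℕ) : ℝ) := by exact_mod_cast hb
  _ = (3/2) * 2^lam := by
      push_cast
      rw [show lam = (lam - 1) + 1 by omega, pow_succ]
      push_cast
      ring_nf
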